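/- If G is the Ore-composition of two graphs G1 and G2, then T(G) ≥ T(G1) + T(G2) − 2. Furthermore, if G2 = K_5, then T(G) ≥ T(G1) + 1. -/

import Mathlib

open SimpleGraph

namespace Postle

noncomputable def epsC : ℝ := 1 / 21
noncomputable def delC : ℝ := 8 / 21
noncomputable def PC : ℝ := 48 / 21
noncomputable def QC : ℝ := 8 / 21

/-- The degree of a vertex, via the cardinality of its neighbor set. -/
noncomputable def degS {V : Type} (G : SimpleGraph V) (v : V) : ℕ :=
  (G.neighborSet v).ncard

/-- A graph is 5-critical if it is not 4-colorable but every proper subgraph is. -/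
def FiveCritical {V : Type} (G : SimpleGraph V) : Prop :=
  ¬ G.Colorable 4 ∧ ∀ H : SimpleGraph V, H < G → H.Colorable 4

/-- `G` is (isomorphic to) the complete graph `K₅`. -/
def IsK5 {V : Type} (G : SimpleGraph V) : Prop :=
  Nonempty (G ≃g (⊤ : SimpleGraph (Fin 5)))

/-- `T(G)`: the maximum, over collections of pairwise disjoint cliques of size 3 or 4 in `G`,
of (number of 3-cliques) + 2 * (number of 4-cliques); each clique of size `k` contributes
`k - 2`. -/
noncomputable def TT {V : Type} (G : SimpleGraph V) : ℕ :=
  sSup { n : ℕ | ∃ C : Finset (Finset V),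
    ((C : Set (Finset V)).Pairwise fun A B => Disjoint A B) ∧
    (∀ W ∈ C, G.IsClique (W : Set V) ∧ (W.card = 3 ∨ W.card = 4)) ∧
    n = ∑ W ∈ C, (W.card - 2) }

/-- The potential `p(G) = (9+ε)|V(G)| - 4|E(G)| - δ·T(G)` with `ε = 1/21`, `δ = 8/21`. -/
noncomputable def pot {V : Type} (G : SimpleGraph V) : ℝ :=
  (9 + epsC) * (Nat.card V : ℝ) - 4 * (G.edgeSet.ncard : ℝ) - delC * (TT G : ℝ)

/-- `p_G(R) = p(G[R])`. -/
noncomputable def potOn {V : Type} (G : SimpleGraph V) (R : Set V) : ℝ :=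
  pot (G.induce R)

/-- The Kostochka–Yancey potential `p_KY(G) = 9|V(G)| - 4|E(G)|`. -/
noncomputable def potKY {V : Type} (G : SimpleGraph V) : ℝ :=
  9 * (Nat.card V : ℝ) - 4 * (G.edgeSet.ncard : ℝ)

noncomputable def potKYOn {V : Type} (G : SimpleGraph V) (R : Set V) : ℝ :=
  potKY (G.induce R)

/-- `G` is an Ore-composition of `G₁` (the edge side, with replaced edge `xy`) and `G₂`
(the vertex side, with split vertex `z`): delete the edge `xy` of `G₁`, split `z` into two
vertices of positive degree, and identify them with `x` and `y`. The set `S` records which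
neighbors of `z` get attached to `x`. -/
def IsOreComposition {V V₁ V₂ : Type} (G : SimpleGraph V)
    (G₁ : SimpleGraph V₁) (G₂ : SimpleGraph V₂) : Prop :=
  ∃ (x y : V₁) (z : V₂) (f₁ : V₁ ↪ V) (f₂ : {w : V₂ // w ≠ z} ↪ V) (S : Set V₂),
    G₁.Adj x y ∧
    (∀ w ∈ S, G₂.Adj z w) ∧ S.Nonempty ∧ (G₂.neighborSet z \ S).Nonempty ∧
    Set.range ⇑f₁ ∩ Set.range ⇑f₂ = ∅ ∧
    Set.range ⇑f₁ ∪ Set.range ⇑f₂ = Set.univ ∧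
    ∀ a b : V, G.Adj a b ↔
      ((∃ a' b' : V₁, f₁ a' = a ∧ f₁ b' = b ∧ G₁.Adj a' b' ∧
          ¬(a' = x ∧ b' = y) ∧ ¬(a' = y ∧ b' = x)) ∨
       (∃ a' b' : {w : V₂ // w ≠ z}, f₂ a' = a ∧ f₂ b' = b ∧ G₂.Adj a'.1 b'.1) ∨
       (∃ w : {w : V₂ // w ≠ z}, G₂.Adj z w.1 ∧
         ((((a = f₁ x ∧ b = f₂ w) ∨ (b = f₁ x ∧ a = f₂ w)) ∧ w.1 ∈ S) ∨
          (((a = f₁ y ∧ b = f₂ w) ∨ (b = f₁ y ∧ a = f₂ w)) ∧ w.1 ∉ S))))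

/-- A graph is 5-Ore if it can be obtained from copies of `K₅` by repeated Ore-compositions. -/
inductive Is5Ore : {V : Type} → SimpleGraph V → Prop
  | k5 {V : Type} {G : SimpleGraph V} (h : IsK5 G) : Is5Ore G
  | ore {V V₁ V₂ : Type} {G : SimpleGraph V} {G₁ : SimpleGraph V₁} {G₂ : SimpleGraph V₂}
      (h₁ : Is5Ore G₁) (h₂ : Is5Ore G₂) (h : IsOreComposition G G₁ G₂) : Is5Ore G

/-- The boundary of `R`: the vertices of `R` with a neighbor outside `R`. -/
def boundary {V : Type} (G : SimpleGraph V) (R : Set V) : Set V :=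
  {v : V | v ∈ R ∧ ∃ w, w ∉ R ∧ G.Adj v w}

/-- The graph `G + uv` obtained by adding the edge `uv`. -/
noncomputable def addEdge {α : Type} (G : SimpleGraph α) (u v : α) : SimpleGraph α :=
  G ⊔ SimpleGraph.fromEdgeSet {s(u, v)}

/-- `R` is an Ore-collapsible subset of `G`: a proper subset whose boundary consists of exactly
two non-adjacent vertices `u, v` such that `G[R] + uv` is 5-Ore. -/
def OreCollapsible {V : Type} (G : SimpleGraph V) (R : Set V) : Prop :=
  R ≠ Set.univ ∧ ∃ u v : ↥R, u.1 ≠ v.1 ∧ ¬ G.Adj u.1 v.1 ∧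
    boundary G R = {u.1, v.1} ∧ Is5Ore (addEdge (G.induce R) u v)

/-- An emerald: a subgraph isomorphic to `K₄` all of whose vertices have degree 4 in `G`,
given by its vertex set. -/
def IsEmerald {V : Type} (G : SimpleGraph V) (S : Set V) : Prop :=
  S.ncard = 4 ∧ (∀ a ∈ S, ∀ b ∈ S, a ≠ b → G.Adj a b) ∧ ∀ v ∈ S, degS G v = 4

/-- A diamond: a subgraph isomorphic to `K₅ - e` in which the vertices not incident to `e`
have degree 4 in `G`, given by its vertex set. -/
def IsDiamond {V : Type} (G : SimpleGraph V) (D : Set V) : Prop :=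
  D.ncard = 5 ∧ ∃ u ∈ D, ∃ v ∈ D, u ≠ v ∧
    (∀ a ∈ D, ∀ b ∈ D, a ≠ b → ¬(a = u ∧ b = v) → ¬(a = v ∧ b = u) → G.Adj a b) ∧
    ∀ w ∈ D, w ≠ u → w ≠ v → degS G w = 4

/-- A graph is ungemmed if it contains neither a diamond nor an emerald. -/
def Ungemmed {V : Type} (G : SimpleGraph V) : Prop :=
  (¬ ∃ D : Set V, IsDiamond G D) ∧ ¬ ∃ S : Set V, IsEmerald G S

/-- `R` is collapsible: a proper subset with `|R| ≥ 5` such that in every proper 4-coloring of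
`G[R]` all boundary vertices of `R` receive the same color. -/
def Collapsible {V : Type} (G : SimpleGraph V) (R : Set V) : Prop :=
  R ≠ Set.univ ∧ 5 ≤ R.ncard ∧
    ∀ φ : (G.induce R).Coloring (Fin 4), ∀ u v : ↥R,
      u.1 ∈ boundary G R → v.1 ∈ boundary G R → φ u = φ v

/-- The critical complement of a collapsible set `R`: identify the boundary of `R` to a single
new vertex (`none`) and delete the rest of `R`. -/
noncomputable def criticalComplement {V : Type} (G : SimpleGraph V) (R : Set V) :
    SimpleGraph (Option ↥(Rᶜ)) :=
  SimpleGraph.fromRel fun a b =>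
    match a, b with
    | some w, some w' => G.Adj w.1 w'.1
    | none, some w => ∃ x ∈ boundary G R, G.Adj x w.1
    | _, _ => False

/-- The φ-identification `G_φ(R)`: vertices outside `R` together with four vertices `x_i`;
the vertices of `R` colored `i` are identified to `x_i`, and all edges `x_i x_j` are added. -/
noncomputable def phiIdent {V : Type} (G : SimpleGraph V) (R : Set V) (φ : ↥R → Fin 4) :
    SimpleGraph ((↥(Rᶜ)) ⊕ Fin 4) :=
  SimpleGraph.fromRel fun a b =>
    match a, b with
    | Sum.inl w, Sum.inl w' => G.Adj w.1 w'.1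
    | Sum.inl w, Sum.inr i => ∃ r : ↥R, φ r = i ∧ G.Adj r.1 w.1
    | Sum.inr _, Sum.inr _ => True
    | _, _ => False

/-- A critical extension of `R` in `G`: a proper 4-coloring `φ` of `G[R]` together with a
5-critical subgraph `W` of the φ-identification `G_φ(R)`, with vertex set `S`. -/
structure CriticalExtension {V : Type} (G : SimpleGraph V) (R : Set V) where
  φ : (G.induce R).Coloring (Fin 4)
  S : Set ((↥(Rᶜ)) ⊕ Fin 4)
  W : SimpleGraph ↥S
  le : W ≤ (phiIdent G R ⇑φ).induce S
  crit : FiveCritical W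

/-- The critical extension `R' = (V(W) - V(X)) ∪ R` of `R`. -/
noncomputable def CriticalExtension.verts {V : Type} {G : SimpleGraph V} {R : Set V}
    (E : CriticalExtension G R) : Set V :=
  R ∪ {v : V | ∃ h : v ∈ Rᶜ, Sum.inl (⟨v, h⟩ : ↥(Rᶜ)) ∈ E.S}

/-- The size `|X|` of the core `W ∩ X` of the extension. -/
noncomputable def CriticalExtension.coreCard {V : Type} {G : SimpleGraph V} {R : Set V}
    (E : CriticalExtension G R) : ℕ :=
  {i : Fin 4 | Sum.inr i ∈ E.S}.ncard

/-- The graph `W - X` obtained from the extender `W` by deleting the core vertices. -/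
noncomputable def CriticalExtension.WminusX {V : Type} {G : SimpleGraph V} {R : Set V}
    (E : CriticalExtension G R) :=
  E.W.induce {w : ↥E.S | w.1.isLeft = true}

/-- `f(n) = (9+ε)n - 4·C(n,2)`. -/
noncomputable def fExt (n : ℕ) : ℝ := (9 + epsC) * (n : ℝ) - 4 * ((n.choose 2 : ℕ) : ℝ)

/-- The closed neighborhood of a vertex. -/
def closedNbhd {V : Type} (G : SimpleGraph V) (v : V) : Set V :=
  insert v (G.neighborSet v)

/-- A cluster: a maximal set of degree-four vertices with the same closed neighborhood. -/
def IsCluster {V : Type} (G : SimpleGraph V) (C : Set V) : Prop :=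
  C.Nonempty ∧ (∀ v ∈ C, degS G v = 4) ∧
  (∀ u ∈ C, ∀ v ∈ C, closedNbhd G u = closedNbhd G v) ∧
  ∀ C' : Set V, C ⊆ C' → (∀ v ∈ C', degS G v = 4) →
    (∀ u ∈ C', ∀ v ∈ C', closedNbhd G u = closedNbhd G v) → C' = C

open Classical in
/-- The list of cluster sizes of `G`, in decreasing order. -/
noncomputable def clusterList {V : Type} [Fintype V] (G : SimpleGraph V) : List ℕ :=
  ((((Finset.univ : Finset V).filter fun v => degS G v = 4).image
      fun v => (Finset.univ : Finset V).filter
        fun u => degS G u = 4 ∧ closedNbhd G u = closedNbhd G v).val.map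
    Finset.card).sort (· ≤ ·) |>.reverse

/-- `H` is smaller than `G`: fewer vertices; or the same number of vertices and more edges; or
the same number of vertices and edges and `H` precedes `G` in the lexicographic ordering of
cluster sizes listed in decreasing order. -/
def Smaller {V₁ V₂ : Type} [Fintype V₁] [Fintype V₂]
    (H : SimpleGraph V₁) (G : SimpleGraph V₂) : Prop :=
  Nat.card V₁ < Nat.card V₂ ∨
  (Nat.card V₁ = Nat.card V₂ ∧ G.edgeSet.ncard < H.edgeSet.ncard) ∨
  (Nat.card V₁ = Nat.card V₂ ∧ H.edgeSet.ncard = G.edgeSet.ncard ∧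
    List.Lex (· > ·) (clusterList H) (clusterList G))

/-- A 5-critical graph `G` is good if every smaller 5-critical graph satisfies the conclusion
of the main theorem. -/
def Good {V : Type} [Fintype V] (G : SimpleGraph V) : Prop :=
  FiveCritical G ∧
    ∀ (V' : Type) [Fintype V'] (H : SimpleGraph V'), FiveCritical H → Smaller H G →
      (IsK5 H → pot H = 5 + 5 * epsC - 2 * delC) ∧
      (Is5Ore H → ¬ IsK5 H →
        pot H ≤ 5 + (Nat.card V' : ℝ) * epsC - (2 + ((Nat.card V' : ℝ) - 1) / 4) * delC) ∧
      (¬ Is5Ore H → pot H ≤ 5 - PC)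

/-- `G` is tight if it is good and `p(G) ≥ 5 - P - Q`. -/
def Tight {V : Type} [Fintype V] (G : SimpleGraph V) : Prop :=
  Good G ∧ pot G ≥ 5 - PC - QC

/-- `u, v` is an identifiable pair in a proper subset `R`: `G[R] + uv` is not 4-colorable. -/
def IdentifiablePair {V : Type} (G : SimpleGraph V) (R : Set V) (u v : ↥R) : Prop :=
  R ≠ Set.univ ∧ ¬ (addEdge (G.induce R) u v).Colorable 4

private lemma TTset_bdd {V : Type} [Fintype V] (G : SimpleGraph V) :
    BddAbove { n : ℕ | ∃ C : Finset (Finset V),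
      ((C : Set (Finset V)).Pairwise fun A B => Disjoint A B) ∧
      (∀ W ∈ C, G.IsClique (W : Set V) ∧ (W.card = 3 ∨ W.card = 4)) ∧
      n = ∑ W ∈ C, (W.card - 2) } := by
  classical
  refine ⟨Fintype.card V, ?_⟩
  rintro n ⟨C, hd, _, rfl⟩
  calc ∑ W ∈ C, (W.card - 2) ≤ ∑ W ∈ C, W.card :=
        Finset.sum_le_sum fun W _ => Nat.sub_le _ _
    _ = (C.biUnion id).card :=
        (Finset.card_biUnion fun A hA B hB hne =>
          hd (Finset.mem_coe.mpr hA) (Finset.mem_coe.mpr hB) hne).symm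
    _ ≤ Fintype.card V := Finset.card_le_univ _

private lemma le_TT {V : Type} [Fintype V] (G : SimpleGraph V) (C : Finset (Finset V))
    (hd : (C : Set (Finset V)).Pairwise fun A B => Disjoint A B)
    (hcl : ∀ W ∈ C, G.IsClique (W : Set V) ∧ (W.card = 3 ∨ W.card = 4)) :
    ∑ W ∈ C, (W.card - 2) ≤ TT G :=
  le_csSup (TTset_bdd G) ⟨C, hd, hcl, rfl⟩

private lemma TT_attained {V : Type} [Fintype V] (G : SimpleGraph V) :
    ∃ C : Finset (Finset V),
      ((C : Set (Finset V)).Pairwise fun A B => Disjoint A B) ∧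
      (∀ W ∈ C, G.IsClique (W : Set V) ∧ (W.card = 3 ∨ W.card = 4)) ∧
      TT G = ∑ W ∈ C, (W.card - 2) := by
  have hne : Set.Nonempty { n : ℕ | ∃ C : Finset (Finset V),
      ((C : Set (Finset V)).Pairwise fun A B => Disjoint A B) ∧
      (∀ W ∈ C, G.IsClique (W : Set V) ∧ (W.card = 3 ∨ W.card = 4)) ∧
      n = ∑ W ∈ C, (W.card - 2) } :=
    ⟨0, ∅, by simp, by simp, by simp⟩
  obtain ⟨C, hd, hcl, hn⟩ := Nat.sSup_mem hne (TTset_bdd G)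
  exact ⟨C, hd, hcl, hn⟩

/-- Shrinking a clique collection to avoid a pair `x, y` costs at most 1. -/
private lemma shrink {V : Type} (G : SimpleGraph V) (x y : V) (C : Finset (Finset V))
    (hd : (C : Set (Finset V)).Pairwise fun A B => Disjoint A B)
    (hcl : ∀ W ∈ C, G.IsClique (W : Set V) ∧ (W.card = 3 ∨ W.card = 4)) :
    ∃ C' : Finset (Finset V),
      ((C' : Set (Finset V)).Pairwise fun A B => Disjoint A B) ∧
      (∀ W ∈ C', G.IsClique (W : Set V) ∧ (W.card = 3 ∨ W.card = 4) ∧ ¬(x ∈ W ∧ y ∈ W)) ∧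
      ∑ W ∈ C, (W.card - 2) ≤ (∑ W ∈ C', (W.card - 2)) + 1 := by
  classical
  by_cases hxy : ∃ W ∈ C, x ∈ W ∧ y ∈ W
  · obtain ⟨W₀, hW₀, hx, hy⟩ := hxy
    have hnx : ∀ W ∈ C, W ≠ W₀ → x ∉ W := by
      intro W hW hne hxW
      exact Finset.disjoint_left.mp
        (hd (Finset.mem_coe.mpr hW) (Finset.mem_coe.mpr hW₀) hne) hxW hx
    have hsum₀ : ∑ W ∈ C, (W.card - 2) = (W₀.card - 2) + ∑ W ∈ C.erase W₀, (W.card - 2) :=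
      (Finset.add_sum_erase C _ hW₀).symm
    rcases (hcl W₀ hW₀).2 with h3 | h4
    · refine ⟨C.erase W₀, hd.mono (by simp [Finset.erase_subset]), ?_, ?_⟩
      · intro W hW
        have hWC := Finset.mem_of_mem_erase hW
        refine ⟨(hcl W hWC).1, (hcl W hWC).2, ?_⟩
        intro ⟨hxW, _⟩
        exact hnx W hWC (Finset.ne_of_mem_erase hW) hxW
      · rw [hsum₀, h3]; omega
    · -- card W₀ = 4 : keep W₀.erase x as a triangle
      have hnotmem : W₀.erase x ∉ C.erase W₀ := by
        intro hmem
        have hdisj := hd (Finset.mem_coe.mpr (Finset.mem_of_mem_erase hmem))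
          (Finset.mem_coe.mpr hW₀) (Finset.ne_of_mem_erase hmem)
        have hcard : (W₀.erase x).card = 3 := by rw [Finset.card_erase_of_mem hx, h4]
        obtain ⟨a, ha⟩ := Finset.card_pos.mp (by omega : 0 < (W₀.erase x).card)
        exact Finset.disjoint_left.mp hdisj ha (Finset.mem_of_mem_erase ha)
      refine ⟨insert (W₀.erase x) (C.erase W₀), ?_, ?_, ?_⟩
      · intro P hP Q hQ hne
        simp only [Finset.coe_insert, Set.mem_insert_iff, Finset.mem_coe] at hP hQ
        have key : ∀ R, R ∈ C.erase W₀ → Disjoint (W₀.erase x) R := by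
          intro R hR
          exact Finset.disjoint_of_subset_left (Finset.erase_subset _ _)
            (hd (Finset.mem_coe.mpr hW₀) (Finset.mem_coe.mpr (Finset.mem_of_mem_erase hR))
              (Ne.symm (Finset.ne_of_mem_erase hR)))
        rcases hP with rfl | hP <;> rcases hQ with rfl | hQ
        · exact absurd rfl hne
        · exact key Q hQ
        · exact (key P hP).symm
        · exact hd (Finset.mem_coe.mpr (Finset.mem_of_mem_erase hP))
            (Finset.mem_coe.mpr (Finset.mem_of_mem_erase hQ))
            (fun hh => hne (by rw [hh]))
      · intro W hW
        rcases Finset.mem_insert.mp hW with rfl | hW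
        · refine ⟨(hcl W₀ hW₀).1.subset (by simp [Finset.erase_subset]), ?_, ?_⟩
          · left; rw [Finset.card_erase_of_mem hx, h4]
          · intro ⟨hxW, _⟩; exact (Finset.notMem_erase x W₀) hxW
        · have hWC := Finset.mem_of_mem_erase hW
          refine ⟨(hcl W hWC).1, (hcl W hWC).2, ?_⟩
          intro ⟨hxW, _⟩
          exact hnx W hWC (Finset.ne_of_mem_erase hW) hxW
      · rw [hsum₀, h4, Finset.sum_insert hnotmem, Finset.card_erase_of_mem hx, h4]; omega
  · refine ⟨C, hd, ?_, Nat.le_succ _⟩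
    intro W hW
    exact ⟨(hcl W hW).1, (hcl W hW).2, fun hc => hxy ⟨W, hW, hc⟩⟩

/-- If `G` is the Ore-composition of `G₁` and `G₂`, then `T(G) ≥ T(G₁) + T(G₂) - 2`;
furthermore, if `G₂ = K₅`, then `T(G) ≥ T(G₁) + 1`. -/
theorem stmt_3 {V V₁ V₂ : Type} [Fintype V] [Fintype V₁] [Fintype V₂]
    (G : SimpleGraph V) (G₁ : SimpleGraph V₁) (G₂ : SimpleGraph V₂)
    (h : IsOreComposition G G₁ G₂) :
    (TT G : ℤ) ≥ (TT G₁ : ℤ) + (TT G₂ : ℤ) - 2 ∧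
    (IsK5 G₂ → (TT G : ℤ) ≥ (TT G₁ : ℤ) + 1) := by
  classical
  obtain ⟨x, y, z, f₁, f₂, S, hxyadj, hSadj, hSne, hSc, hrdisj, hruniv, hiff⟩ := h
  set g₂ : V₂ → V := fun w => if h : w = z then f₁ x else f₂ ⟨w, h⟩ with hg₂def
  have hg₂val : ∀ (w : V₂) (hw : w ≠ z), g₂ w = f₂ ⟨w, hw⟩ := fun w hw => dif_neg hw
  have hg₂inj : ∀ a, a ≠ z → ∀ b, b ≠ z → g₂ a = g₂ b → a = b := by
    intro a ha b hb hab
    rw [hg₂val a ha, hg₂val b hb] at hab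
    have := f₂.injective hab
    exact congrArg Subtype.val this
  have hg₂range : ∀ w, w ≠ z → g₂ w ∈ Set.range ⇑f₂ := by
    intro w hw; rw [hg₂val w hw]; exact ⟨_, rfl⟩
  have hranges : ∀ v : V, v ∈ Set.range ⇑f₁ → v ∈ Set.range ⇑f₂ → False := by
    intro v h1 h2
    have : v ∈ Set.range ⇑f₁ ∩ Set.range ⇑f₂ := ⟨h1, h2⟩
    rw [hrdisj] at this; exact this
  have hadj1 : ∀ a b : V₁, G₁.Adj a b → ¬(a = x ∧ b = y) → ¬(a = y ∧ b = x) →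
      G.Adj (f₁ a) (f₁ b) := fun a b hab h1 h2 =>
    (hiff _ _).mpr (Or.inl ⟨a, b, rfl, rfl, hab, h1, h2⟩)
  have hadj2 : ∀ (a b : V₂), a ≠ z → b ≠ z → G₂.Adj a b → G.Adj (g₂ a) (g₂ b) := by
    intro a b ha hb hab
    rw [hg₂val a ha, hg₂val b hb]
    exact (hiff _ _).mpr (Or.inr (Or.inl ⟨⟨a, ha⟩, ⟨b, hb⟩, rfl, rfl, hab⟩))
  -- image cliques
  have hclique1 : ∀ W : Finset V₁, G₁.IsClique (W : Set V₁) → ¬(x ∈ W ∧ y ∈ W) →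
      G.IsClique ((W.image f₁ : Finset V) : Set V) := by
    intro W hW hxy a ha b hb hne
    simp only [Finset.coe_image, Set.mem_image, Finset.mem_coe] at ha hb
    obtain ⟨a', ha', rfl⟩ := ha
    obtain ⟨b', hb', rfl⟩ := hb
    have hne' : a' ≠ b' := fun hh => hne (by rw [hh])
    refine hadj1 a' b' (hW ha' hb' hne') ?_ ?_
    · rintro ⟨rfl, rfl⟩; exact hxy ⟨ha', hb'⟩
    · rintro ⟨rfl, rfl⟩; exact hxy ⟨hb', ha'⟩
  have hclique2 : ∀ W : Finset V₂, G₂.IsClique (W : Set V₂) → z ∉ W →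
      G.IsClique ((W.image g₂ : Finset V) : Set V) := by
    intro W hW hz a ha b hb hne
    simp only [Finset.coe_image, Set.mem_image, Finset.mem_coe] at ha hb
    obtain ⟨a', ha', rfl⟩ := ha
    obtain ⟨b', hb', rfl⟩ := hb
    have hne' : a' ≠ b' := fun hh => hne (by rw [hh])
    exact hadj2 a' b' (fun hh => hz (hh ▸ ha')) (fun hh => hz (hh ▸ hb')) (hW ha' hb' hne')
  have hcard2 : ∀ W : Finset V₂, z ∉ W → (W.image g₂).card = W.card := by
    intro W hz
    apply Finset.card_image_of_injOn
    intro a ha b hb hab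
    exact hg₂inj a (fun hh => hz (hh ▸ ha)) b (fun hh => hz (hh ▸ hb)) hab
  -- optimal collections and their shrinkings
  obtain ⟨C₁, hd₁, hcl₁, hT₁⟩ := TT_attained G₁
  obtain ⟨C₁', hd₁', hcl₁', hs₁⟩ := shrink G₁ x y C₁ hd₁ hcl₁
  obtain ⟨C₂, hd₂, hcl₂, hT₂⟩ := TT_attained G₂
  obtain ⟨C₂', hd₂', hcl₂', hs₂⟩ := shrink G₂ z z C₂ hd₂ hcl₂
  have hz' : ∀ W ∈ C₂', z ∉ W := by
    intro W hW hzW; exact (hcl₂' W hW).2.2 ⟨hzW, hzW⟩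
  set A : Finset (Finset V) := C₁'.image (fun W => W.image f₁) with hAdef
  set B : Finset (Finset V) := C₂'.image (fun W => W.image g₂) with hBdef
  -- facts about members of A and B
  have hArange : ∀ P ∈ A, ∀ v ∈ P, v ∈ Set.range ⇑f₁ := by
    intro P hP v hv
    obtain ⟨W, _, rfl⟩ := Finset.mem_image.mp hP
    obtain ⟨a, _, rfl⟩ := Finset.mem_image.mp hv
    exact ⟨a, rfl⟩
  have hBrange : ∀ P ∈ B, ∀ v ∈ P, v ∈ Set.range ⇑f₂ := by
    intro P hP v hv
    obtain ⟨W, hW, rfl⟩ := Finset.mem_image.mp hP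
    obtain ⟨a, ha, rfl⟩ := Finset.mem_image.mp hv
    exact hg₂range a (fun hh => hz' W hW (hh ▸ ha))
  have hAB_disj : ∀ P ∈ A, ∀ Q ∈ B, Disjoint P Q := by
    intro P hP Q hQ
    rw [Finset.disjoint_left]
    intro v hvP hvQ
    exact absurd (hBrange Q hQ v hvQ) (fun hh => hranges v (hArange P hP v hvP) hh)
  have hA_good : ∀ P ∈ A, G.IsClique (P : Set V) ∧ (P.card = 3 ∨ P.card = 4) := by
    intro P hP
    obtain ⟨W, hW, rfl⟩ := Finset.mem_image.mp hP
    obtain ⟨hWcl, hWcard, hWxy⟩ := hcl₁' W hW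
    rw [Finset.card_image_of_injective _ f₁.injective]
    exact ⟨hclique1 W hWcl hWxy, hWcard⟩
  have hB_good : ∀ P ∈ B, G.IsClique (P : Set V) ∧ (P.card = 3 ∨ P.card = 4) := by
    intro P hP
    obtain ⟨W, hW, rfl⟩ := Finset.mem_image.mp hP
    obtain ⟨hWcl, hWcard, _⟩ := hcl₂' W hW
    rw [hcard2 W (hz' W hW)]
    exact ⟨hclique2 W hWcl (hz' W hW), hWcard⟩
  have hA_pair : ∀ P ∈ A, ∀ Q ∈ A, P ≠ Q → Disjoint P Q := by
    intro P hP Q hQ hne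
    obtain ⟨W₁, hW₁, rfl⟩ := Finset.mem_image.mp hP
    obtain ⟨W₂, hW₂, rfl⟩ := Finset.mem_image.mp hQ
    have hWne : W₁ ≠ W₂ := fun hh => hne (by rw [hh])
    have hWd := hd₁' (Finset.mem_coe.mpr hW₁) (Finset.mem_coe.mpr hW₂) hWne
    rw [Finset.disjoint_left]
    rintro v hv₁ hv₂
    obtain ⟨a, ha, rfl⟩ := Finset.mem_image.mp hv₁
    obtain ⟨b, hb, hba⟩ := Finset.mem_image.mp hv₂
    have : b = a := f₁.injective hba
    exact Finset.disjoint_left.mp hWd ha (this ▸ hb)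
  have hB_pair : ∀ P ∈ B, ∀ Q ∈ B, P ≠ Q → Disjoint P Q := by
    intro P hP Q hQ hne
    obtain ⟨W₁, hW₁, rfl⟩ := Finset.mem_image.mp hP
    obtain ⟨W₂, hW₂, rfl⟩ := Finset.mem_image.mp hQ
    have hWne : W₁ ≠ W₂ := fun hh => hne (by rw [hh])
    have hWd := hd₂' (Finset.mem_coe.mpr hW₁) (Finset.mem_coe.mpr hW₂) hWne
    rw [Finset.disjoint_left]
    rintro v hv₁ hv₂
    obtain ⟨a, ha, rfl⟩ := Finset.mem_image.mp hv₁
    obtain ⟨b, hb, hba⟩ := Finset.mem_image.mp hv₂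
    have : b = a := hg₂inj b (fun hh => hz' W₂ hW₂ (hh ▸ hb))
      a (fun hh => hz' W₁ hW₁ (hh ▸ ha)) hba
    exact (Finset.disjoint_left.mp hWd ha) (this ▸ hb)
  -- sums over A and B
  have hsumA : ∑ P ∈ A, (P.card - 2) = ∑ W ∈ C₁', (W.card - 2) := by
    rw [hAdef, Finset.sum_image]
    · exact Finset.sum_congr rfl fun W _ => by
        rw [Finset.card_image_of_injective _ f₁.injective]
    · intro W₁ _ W₂ _ hh
      exact Finset.image_injective f₁.injective hh
  have hsumB : ∑ P ∈ B, (P.card - 2) = ∑ W ∈ C₂', (W.card - 2) := by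
    rw [hBdef, Finset.sum_image]
    · exact Finset.sum_congr rfl fun W hW => by rw [hcard2 W (hz' W hW)]
    · intro W₁ hW₁ W₂ hW₂ hh
      ext a
      constructor
      · intro ha
        have : g₂ a ∈ W₂.image g₂ := (show W₁.image g₂ = W₂.image g₂ from hh) ▸ Finset.mem_image_of_mem g₂ ha
        obtain ⟨b, hb, hba⟩ := Finset.mem_image.mp this
        have := hg₂inj b (fun h0 => hz' W₂ hW₂ (h0 ▸ hb))
          a (fun h0 => hz' W₁ hW₁ (h0 ▸ ha)) hba
        exact this ▸ hb
      · intro ha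
        have : g₂ a ∈ W₁.image g₂ := (show W₁.image g₂ = W₂.image g₂ from hh) ▸ Finset.mem_image_of_mem g₂ ha
        obtain ⟨b, hb, hba⟩ := Finset.mem_image.mp this
        have := hg₂inj b (fun h0 => hz' W₁ hW₁ (h0 ▸ hb))
          a (fun h0 => hz' W₂ hW₂ (h0 ▸ ha)) hba
        exact this ▸ hb
  constructor
  · -- part 1
    have hABd : Disjoint A B := by
      rw [Finset.disjoint_left]
      intro P hPA hPB
      have hPne : P.Nonempty := by
        have := (hA_good P hPA).2
        exact Finset.card_pos.mp (by omega)
      obtain ⟨v, hv⟩ := hPne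
      exact hranges v (hArange P hPA v hv) (hBrange P hPB v hv)
    have hpair : (((A ∪ B : Finset (Finset V)) : Set (Finset V)).Pairwise
        fun P Q => Disjoint P Q) := by
      intro P hP Q hQ hne
      simp only [Finset.coe_union, Set.mem_union, Finset.mem_coe] at hP hQ
      rcases hP with hP | hP <;> rcases hQ with hQ | hQ
      · exact hA_pair P hP Q hQ hne
      · exact hAB_disj P hP Q hQ
      · exact (hAB_disj Q hQ P hP).symm
      · exact hB_pair P hP Q hQ hne
    have hgood : ∀ W ∈ A ∪ B, G.IsClique (W : Set V) ∧ (W.card = 3 ∨ W.card = 4) := by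
      intro W hW
      rcases Finset.mem_union.mp hW with hW | hW
      · exact hA_good W hW
      · exact hB_good W hW
    have hle := le_TT G (A ∪ B) hpair hgood
    rw [Finset.sum_union hABd, hsumA, hsumB] at hle
    have h1 : TT G₁ ≤ (∑ W ∈ C₁', (W.card - 2)) + 1 := hT₁ ▸ hs₁
    have h2 : TT G₂ ≤ (∑ W ∈ C₂', (W.card - 2)) + 1 := hT₂ ▸ hs₂
    have : TT G₁ + TT G₂ ≤ TT G + 2 := by omega
    omega
  · -- part 2 : G₂ = K₅
    rintro ⟨e⟩
    have hcard5 : Fintype.card V₂ = 5 := by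
      have := Fintype.card_congr e.toEquiv
      simpa using this
    have hAdjAll : ∀ a b : V₂, a ≠ b → G₂.Adj a b := by
      intro a b hab
      apply e.map_rel_iff.mp
      simp only [SimpleGraph.top_adj]
      exact fun hh => hab (e.toEquiv.injective hh)
    set W₂ : Finset V₂ := Finset.univ.erase z with hW₂def
    have hzW₂ : z ∉ W₂ := Finset.notMem_erase z _
    have hW₂card : W₂.card = 4 := by
      rw [hW₂def, Finset.card_erase_of_mem (Finset.mem_univ z), Finset.card_univ, hcard5]
    have hW₂cl : G₂.IsClique (W₂ : Set V₂) := fun a _ b _ hne => hAdjAll a b hne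
    set K : Finset V := W₂.image g₂ with hKdef
    have hKcard : K.card = 4 := by rw [hKdef, hcard2 W₂ hzW₂, hW₂card]
    have hKrange : ∀ v ∈ K, v ∈ Set.range ⇑f₂ := by
      intro v hv
      obtain ⟨a, ha, rfl⟩ := Finset.mem_image.mp hv
      exact hg₂range a (fun hh => hzW₂ (hh ▸ ha))
    have hKA : K ∉ A := by
      intro hK
      obtain ⟨v, hv⟩ := Finset.card_pos.mp (by omega : 0 < K.card)
      exact hranges v (hArange K hK v hv) (hKrange v hv)
    have hpair : (((insert K A : Finset (Finset V)) : Set (Finset V)).Pairwise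
        fun P Q => Disjoint P Q) := by
      intro P hP Q hQ hne
      simp only [Finset.coe_insert, Set.mem_insert_iff, Finset.mem_coe] at hP hQ
      have hKdisj : ∀ R ∈ A, Disjoint K R := by
        intro R hR
        rw [Finset.disjoint_left]
        intro v hvK hvR
        exact hranges v (hArange R hR v hvR) (hKrange v hvK)
      rcases hP with rfl | hP <;> rcases hQ with rfl | hQ
      · exact absurd rfl hne
      · exact hKdisj Q hQ
      · exact (hKdisj P hP).symm
      · exact hA_pair P hP Q hQ hne
    have hgood : ∀ W ∈ insert K A, G.IsClique (W : Set V) ∧ (W.card = 3 ∨ W.card = 4) := by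
      intro W hW
      rcases Finset.mem_insert.mp hW with rfl | hW
      · exact ⟨hclique2 W₂ hW₂cl hzW₂, Or.inr hKcard⟩
      · exact hA_good W hW
    have hle := le_TT G (insert K A) hpair hgood
    rw [Finset.sum_insert hKA, hKcard, hsumA] at hle
    have h1 : TT G₁ ≤ (∑ W ∈ C₁', (W.card - 2)) + 1 := hT₁ ▸ hs₁
    omega

end Postle
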